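/- Let q be an integer ≥ 2, and for n ≥ 1 write n in base q as n = n_w q^w + ... + n_1 q + n_0 with n_w ≠ 0. For an integer l ≥ 0 set s(n,l) = n_w + ... + n_{l+1} and t(n,l) = n_l q^l + ... + n_1 q + n_0. Then ∑_{i ≥ l+1} ⌊n/q^i⌋ = (n − t(n,l) − q^l · s(n,l)) / (q − 1) · q^{-l}, i.e. (q−1)·q^l·∑_{i≥l+1}⌊n/q^i⌋ = n − t(n,l) − q^l·s(n,l). -/

import Mathlib

lemma stmt7_aux (q n l : ℕ) : ∀ N, l ≤ N →
    ((q : ℤ) - 1) * (∑ i ∈ Finset.Icc (l + 1) N, ((n / q ^ i : ℕ) : ℤ)) +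
      (∑ i ∈ Finset.Icc (l + 1) N, (((n / q ^ i) % q : ℕ) : ℤ)) =
    (q : ℤ) * (((n / q ^ (l + 1) : ℕ) : ℤ) - ((n / q ^ (N + 1) : ℕ) : ℤ)) := by
  intro N hN
  induction N, hN using Nat.le_induction with
  | base => simp
  | succ N hN ih =>
    rw [Finset.sum_Icc_succ_top (by omega), Finset.sum_Icc_succ_top (by omega)]
    have h2 : n / q ^ (N + 1 + 1) = (n / q ^ (N + 1)) / q := by
      rw [Nat.div_div_eq_div_mul, ← pow_succ]
    have hm1 := Nat.div_add_mod (n / q ^ (N + 1)) q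
    have hc : (q : ℤ) * ((n / q ^ (N + 1) / q : ℕ) : ℤ) + (((n / q ^ (N + 1)) % q : ℕ) : ℤ)
        = ((n / q ^ (N + 1) : ℕ) : ℤ) := by exact_mod_cast hm1
    rw [h2]
    linarith [ih, hc]

theorem stmt7 (q n l : ℕ) (hq : 2 ≤ q) (hn : 1 ≤ n) :
    ((q : ℤ) - 1) * (q : ℤ) ^ l * (∑ i ∈ Finset.Icc (l + 1) n, ((n / q ^ i : ℕ) : ℤ)) =
      (n : ℤ) - ((n % q ^ (l + 1) : ℕ) : ℤ) -
        (q : ℤ) ^ l * ∑ i ∈ Finset.Icc (l + 1) n, (((n / q ^ i) % q : ℕ) : ℤ) := by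
  rcases le_or_gt l n with h | h
  · have key := stmt7_aux q n l n h
    have hz : n / q ^ (n + 1) = 0 := by
      apply Nat.div_eq_of_lt
      calc n < q ^ n := Nat.lt_pow_self (by omega)
        _ ≤ q ^ (n + 1) := Nat.pow_le_pow_right (by omega) (by omega)
    rw [hz] at key
    simp only [Nat.cast_zero, sub_zero] at key
    have hdm' : (q : ℤ) ^ (l + 1) * ((n / q ^ (l + 1) : ℕ) : ℤ) +
        ((n % q ^ (l + 1) : ℕ) : ℤ) = (n : ℤ) := by
      exact_mod_cast Nat.div_add_mod n (q ^ (l + 1))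
    linear_combination (q : ℤ) ^ l * key + hdm'
  · have he : Finset.Icc (l + 1) n = ∅ := Finset.Icc_eq_empty (by omega)
    have hlt : n < q ^ (l + 1) := by
      calc n < l := h
        _ < q ^ l := Nat.lt_pow_self (by omega)
        _ ≤ q ^ (l + 1) := Nat.pow_le_pow_right (by omega) (by omega)
    rw [he, Nat.mod_eq_of_lt hlt]
    simp
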